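/- arXiv:1002.2876 — 2 statements merged into one kernel-verified Lean document; each statement's English description precedes it below -/
import Mathlib

section
/- Let 1 ≤ p < ∞ and let N be a positive integer. Define scalar functions on [0,1) by θ_j = 2^{(N−j−1)/p} 1_{[0,2^{−N})} for 0 ≤ j ≤ N−1 and θ_j = 0 for all other j. Then θ = (θ_j) is a p-Carleson family with respect to the dyadic filtration on [0,1), and ‖θ‖_{Car^p} ≤ C_p for a constant C_p depending only on p (in particular independent of N): for every m ≥ 0 and every A ∈ 𝒟_m, ∫_A 𝔼|∑_{j≥m} ε_j θ_j(ξ)|^p dξ ≤ C_p^p |A|. -/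
open MeasureTheory ENNReal Set
open scoped ZeroAtInfty

noncomputable section

/-- The `p`-th Rademacher moment `𝔼‖∑_{j ∈ s} ε_j x_j‖^p` of a finite family of vectors,
computed as the average over all choices of signs. -/
def radMoment {ι : Type*} (p : ℝ) {E : Type*} [NormedAddCommGroup E] [NormedSpace ℝ E]
    (x : ι → E) (s : Finset ι) : ℝ :=
  letI : DecidableEq ι := Classical.decEq ι
  (∑ ε : { a // a ∈ s } → Bool,
      ‖∑ j : { a // a ∈ s }, (if ε j then (1 : ℝ) else -1) • x j.1‖ ^ p) / 2 ^ s.card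

/-- The `p`-th Rademacher moment `𝔼‖∑_{j ∈ S} ε_j x_j‖^p` of a (possibly infinite) family,
defined as the supremum of the moments over finite subfamilies (the finite moments increase
along inclusion of index sets, so this agrees with the limit when the series converges). -/
def radMomentSet {ι : Type*} (p : ℝ) {E : Type*} [NormedAddCommGroup E] [NormedSpace ℝ E]
    (x : ι → E) (S : Set ι) : ℝ :=
  ⨆ s : { s : Finset ι // ↑s ⊆ S }, radMoment p x s.1

/-- `(x_j)_{j ∈ S} ∈ Rad(E)`: the Rademacher series `∑_{j ∈ S} ε_j x_j` converges in `L²`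
(unconditional Cauchy criterion for the net of finite partial sums). -/
def MemRad {ι : Type*} {E : Type*} [NormedAddCommGroup E] [NormedSpace ℝ E]
    (x : ι → E) (S : Set ι) : Prop :=
  ∀ δ : ℝ, 0 < δ → ∃ s₀ : Finset ι, ↑s₀ ⊆ S ∧
    ∀ s : Finset ι, ↑s ⊆ S → Disjoint s s₀ → radMoment 2 x s < δ

/-- `E` has type `r` with constant `C`:
`(𝔼‖∑ ε_j x_j‖²)^{1/2} ≤ C (∑ ‖x_j‖^r)^{1/r}`. -/
def HasTypeWith (r C : ℝ) (E : Type*) [NormedAddCommGroup E] [NormedSpace ℝ E] : Prop :=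
  ∀ (N : ℕ) (x : Fin N → E),
    radMoment 2 x Finset.univ ^ (1 / 2 : ℝ) ≤ C * (∑ j, ‖x j‖ ^ r) ^ (1 / r)

/-- `E` has type `r`. -/
def HasType (r : ℝ) (E : Type*) [NormedAddCommGroup E] [NormedSpace ℝ E] : Prop :=
  ∃ C : ℝ, HasTypeWith r C E

/-- The family `T` of operators is `R`-bounded, with respect to `s`-th Rademacher moments,
with constant `C`:  `𝔼‖∑ ε_j T_j x_j‖^s ≤ C^s 𝔼‖∑ ε_j x_j‖^s`. -/
def RBoundedWith (s C : ℝ) {F E : Type*} [NormedAddCommGroup F] [NormedSpace ℝ F]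
    [NormedAddCommGroup E] [NormedSpace ℝ E] (T : Set (F →L[ℝ] E)) : Prop :=
  ∀ (N : ℕ) (Tf : Fin N → F →L[ℝ] E) (x : Fin N → F), (∀ j, Tf j ∈ T) →
    radMoment s (fun j => Tf j (x j)) Finset.univ ≤ C ^ s * radMoment s x Finset.univ

/-- `ℛ_s(T)`, the least `R`-boundedness constant of the family `T` (`∞` if `T` is not
`R`-bounded). -/
def Rbound (s : ℝ) {F E : Type*} [NormedAddCommGroup F] [NormedSpace ℝ F]
    [NormedAddCommGroup E] [NormedSpace ℝ E] (T : Set (F →L[ℝ] E)) : ℝ≥0∞ :=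
  sInf {C : ℝ≥0∞ | ∃ C₀ : ℝ, 0 ≤ C₀ ∧ C = ENNReal.ofReal C₀ ∧ RBoundedWith s C₀ T}

/-- `E` contains an isomorphic copy of `c₀`: an injective bounded linear map from
`c₀ = C₀(ℕ, ℝ)` into `E` which is bounded below. -/
def ContainsIsoC0 (E : Type*) [NormedAddCommGroup E] [NormedSpace ℝ E] : Prop :=
  ∃ T : C₀(ℕ, ℝ) →L[ℝ] E, Function.Injective T ∧ ∃ c : ℝ, 0 < c ∧ ∀ a, c * ‖a‖ ≤ ‖T a‖

/-- `𝒳` is a Banach space of operators inside `L(F,E)`: the (injective) inclusion map is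
linear, the `𝒳`-norm dominates the operator norm, and `𝒳` contains all elementary tensors
`f* ⊗ e` with `‖f* ⊗ e‖_𝒳 = ‖f*‖ ‖e‖`. -/
structure OperatorSpaceIn (𝒳 F E : Type*) [NormedAddCommGroup 𝒳] [NormedSpace ℝ 𝒳]
    [NormedAddCommGroup F] [NormedSpace ℝ F] [NormedAddCommGroup E] [NormedSpace ℝ E] where
  ι : 𝒳 →ₗ[ℝ] (F →L[ℝ] E)
  inj : Function.Injective ι
  norm_le : ∀ x : 𝒳, ‖ι x‖ ≤ ‖x‖
  tensor : ∀ (φ : F →L[ℝ] ℝ) (e : E), ∃ x : 𝒳, ι x = φ.smulRight e ∧ ‖x‖ = ‖φ‖ * ‖e‖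

/-- `g` is (a version of) the conditional expectation of `f` with respect to the
sub-σ-algebra `m`: `g` is strongly `m`-measurable and has the same integral as `f` on every
`m`-measurable set of finite measure. -/
def IsCondExpOf {Ω X : Type*} [mΩ : MeasurableSpace Ω] [NormedAddCommGroup X]
    [NormedSpace ℝ X] (m : MeasurableSpace Ω) (μ : @Measure Ω mΩ) (f g : Ω → X) : Prop :=
  StronglyMeasurable[m] g ∧
    ∀ A : Set Ω, MeasurableSet[m] A → μ A < ⊤ →
      ∫ ξ in A, g ξ ∂μ = ∫ ξ in A, f ξ ∂μ

/-- `(𝔽_j)_{j ∈ ℤ}` is a filtration of sub-σ-algebras on `(Ω, μ)`, each of which is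
σ-finite for `μ`. -/
def IsFiltrationOn {Ω : Type*} [m0 : MeasurableSpace Ω] (μ : Measure Ω)
    (𝔽 : ℤ → MeasurableSpace Ω) : Prop :=
  Monotone 𝔽 ∧ (∀ j, 𝔽 j ≤ m0) ∧ ∀ (j : ℤ) (h : 𝔽 j ≤ m0), SigmaFinite (μ.trim h)

/-- `θ = (θ_j)_{j ∈ ℤ}` is a `p`-Carleson family with constant `C` for the filtration `𝔽`
on `(Ω, μ)`: the `θ_j` are strongly measurable, `(θ_j(ξ))_{j ≥ m} ∈ Rad(F)` for all `m` and
a.e. `ξ`, and `∫_A 𝔼‖∑_{j ≥ m} ε_j θ_j(ξ)‖^p dμ(ξ) ≤ C^p μ(A)` for every `m ∈ ℤ` and every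
`A ∈ 𝔽_m`. -/
def IsCarlesonFamily {Ω : Type*} [MeasurableSpace Ω] {F : Type*} [NormedAddCommGroup F]
    [NormedSpace ℝ F] (μ : Measure Ω) (𝔽 : ℤ → MeasurableSpace Ω) (p : ℝ)
    (θ : ℤ → Ω → F) (C : ℝ≥0∞) : Prop :=
  (∀ j, AEStronglyMeasurable (θ j) μ) ∧
  (∀ m : ℤ, ∀ᵐ ξ ∂μ, MemRad (fun j => θ j ξ) {j : ℤ | m ≤ j}) ∧
  ∀ (m : ℤ) (A : Set Ω), MeasurableSet[𝔽 m] A →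
    ∫⁻ ξ in A, ENNReal.ofReal (radMomentSet p (fun j => θ j ξ) {j : ℤ | m ≤ j}) ∂μ
      ≤ C ^ p * μ A

/-- The `m`-th dyadic σ-algebra on `ℝ`, generated by the dyadic intervals of length `2^{-m}`. -/
def dyadicSigma (m : ℤ) : MeasurableSpace ℝ :=
  MeasurableSpace.generateFrom
    {I : Set ℝ | ∃ k : ℤ, I = Set.Ico ((k : ℝ) / 2 ^ m) ((k + 1 : ℝ) / 2 ^ m)}

/-- The average `E_j f(ξ)` of `f` over the dyadic interval of length `2^{-j}` containing `ξ`. -/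
def dyadicAvg {E : Type*} [NormedAddCommGroup E] [NormedSpace ℝ E]
    (f : ℝ → E) (j : ℤ) (ξ : ℝ) : E :=
  (2 : ℝ) ^ j • ∫ t in Set.Ico ((⌊ξ * 2 ^ j⌋ : ℝ) / 2 ^ j) ((⌊ξ * 2 ^ j⌋ + 1 : ℝ) / 2 ^ j), f t

/-- The RMF property of a space `𝒳` of operators embedded in `L(F,E)` by `ι`: the
Rademacher maximal operator `M_R f(ξ) = ℛ({E_j f(ξ) : j ≥ 0})` associated with the dyadic
filtration of `[0,1)` is bounded from `L^p([0,1); 𝒳)` to `L^p([0,1))` for some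
`p ∈ (1,∞)`. -/
def HasRMFgen {𝒳 F E : Type*} [NormedAddCommGroup 𝒳] [NormedSpace ℝ 𝒳]
    [NormedAddCommGroup F] [NormedSpace ℝ F] [NormedAddCommGroup E] [NormedSpace ℝ E]
    (ι : 𝒳 → (F →L[ℝ] E)) : Prop :=
  ∃ p : ℝ, 1 < p ∧ ∃ C : ℝ≥0∞, C ≠ ⊤ ∧
    ∀ f : ℝ → 𝒳, MemLp f (ENNReal.ofReal p) (volume.restrict (Set.Ico (0 : ℝ) 1)) →
      ∫⁻ ξ in Set.Ico (0 : ℝ) 1,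
          Rbound 2 {T | ∃ j : ℕ, T = ι (dyadicAvg f (j : ℤ) ξ)} ^ p
        ≤ C * ∫⁻ ξ in Set.Ico (0 : ℝ) 1, (‖f ξ‖₊ : ℝ≥0∞) ^ p

/-- The RMF property of the operator space `𝒳 ⊆ L(F,E)`. -/
def HasRMF {𝒳 F E : Type*} [NormedAddCommGroup 𝒳] [NormedSpace ℝ 𝒳]
    [NormedAddCommGroup F] [NormedSpace ℝ F] [NormedAddCommGroup E] [NormedSpace ℝ E]
    (emb : OperatorSpaceIn 𝒳 F E) : Prop :=
  HasRMFgen fun x : 𝒳 => emb.ι x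

/-- The `(q,p)`-Carleson map for the filtration `𝔽` on `(Ω,μ)` is well-defined and bounded
with constant `C`: for every `q`-Carleson family `θ` (with constant `Cθ`) and every
`f ∈ L^p(Ω;𝒳)` with conditional expectations `E_j f`, the sequence
`Θf(ξ) = (E_j f(ξ) θ_j(ξ))_{j∈ℤ}` lies in `Rad(E)` a.e. and
`‖Θf‖_{L^p(Rad(E))} ≤ C ‖θ‖_{Car^q} ‖f‖_{L^p(𝒳)}`. -/
def CarlesonEmbedding {𝒳 F E : Type*} [NormedAddCommGroup 𝒳] [NormedSpace ℝ 𝒳]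
    [NormedAddCommGroup F] [NormedSpace ℝ F] [NormedAddCommGroup E] [NormedSpace ℝ E]
    (emb : OperatorSpaceIn 𝒳 F E) (q p : ℝ) {Ω : Type*} [MeasurableSpace Ω]
    (μ : Measure Ω) (𝔽 : ℤ → MeasurableSpace Ω) (C : ℝ≥0∞) : Prop :=
  ∀ (θ : ℤ → Ω → F) (Cθ : ℝ≥0∞), IsCarlesonFamily μ 𝔽 q θ Cθ →
    ∀ (f : Ω → 𝒳) (Ef : ℤ → Ω → 𝒳),
      MemLp f (ENNReal.ofReal p) μ → (∀ j, IsCondExpOf (𝔽 j) μ f (Ef j)) →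
      (∀ᵐ ξ ∂μ, MemRad (fun j : ℤ => emb.ι (Ef j ξ) (θ j ξ)) Set.univ) ∧
      (∫⁻ ξ, ENNReal.ofReal
            (radMomentSet p (fun j : ℤ => emb.ι (Ef j ξ) (θ j ξ)) Set.univ) ∂μ) ^ (1 / p)
        ≤ C * Cθ * (∫⁻ ξ, (‖f ξ‖₊ : ℝ≥0∞) ^ p ∂μ) ^ (1 / p)

/-- The Lorentz `L^{p,s}` (quasi-)norm of an `ℝ≥0∞`-valued function:
`‖g‖_{L^{p,s}} = (∫_0^∞ (λ μ({g > λ})^{1/p})^s dλ/λ)^{1/s}`. -/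
def lorentzNorm {Ω : Type*} [MeasurableSpace Ω] (μ : Measure Ω) (p s : ℝ)
    (g : Ω → ℝ≥0∞) : ℝ≥0∞ :=
  (∫⁻ t in Set.Ioi (0 : ℝ),
      (ENNReal.ofReal t * μ {ξ | ENNReal.ofReal t < g ξ} ^ (1 / p)) ^ s
        / ENNReal.ofReal t) ^ (1 / s)



section Aux

lemma radMoment_le_rpow {ι : Type*} {p : ℝ} (hp : 0 ≤ p) (x : ι → ℝ) (s : Finset ι)
    {D : ℝ} (h : ∑ j ∈ s, ‖x j‖ ≤ D) : radMoment p x s ≤ D ^ p := by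
  classical
  have hD : 0 ≤ D := le_trans (Finset.sum_nonneg fun j _ => norm_nonneg _) h
  unfold radMoment
  rw [div_le_iff₀ (by positivity)]
  have key : ∀ ε : { a // a ∈ s } → Bool,
      ‖∑ j : { a // a ∈ s }, (if ε j then (1 : ℝ) else -1) • x j.1‖ ^ p ≤ D ^ p := by
    intro ε
    refine Real.rpow_le_rpow (norm_nonneg _) ?_ hp
    refine le_trans (norm_sum_le _ _) (le_trans ?_ h)
    have heq : ∀ j : { a // a ∈ s }, ‖(if ε j then (1 : ℝ) else -1) • x j.1‖ = ‖x j.1‖ := by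
      intro j; rw [norm_smul]; split <;> simp
    rw [Finset.sum_congr rfl fun j _ => heq j]
    exact le_of_eq (Finset.sum_coe_sort s fun j => ‖x j‖)
  refine le_trans (Finset.sum_le_card_nsmul _ _ _ fun ε _ => key ε) ?_
  rw [Finset.card_univ, Fintype.card_fun, Fintype.card_coe, Fintype.card_bool, nsmul_eq_mul]
  push_cast
  ring_nf
  exact le_refl _

lemma radMomentSet_le_rpow {ι : Type*} {p : ℝ} (hp : 0 ≤ p) (x : ι → ℝ) (S : Set ι)
    {D : ℝ} (h : ∀ s : Finset ι, ↑s ⊆ S → ∑ j ∈ s, ‖x j‖ ≤ D) :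
    radMomentSet p x S ≤ D ^ p := by
  haveI : Nonempty { s : Finset ι // ↑s ⊆ S } := ⟨⟨∅, by simp⟩⟩
  exact ciSup_le fun s => radMoment_le_rpow hp x s.1 (h s.1 s.2)

lemma geom_sum_zpow_le {r : ℝ} (hr : 1 < r) (a : ℤ) :
    ∀ b : ℤ, a - 1 ≤ b → ∑ j ∈ Finset.Icc a b, r ^ (b - j) ≤ r ^ (b + 1 - a) / (r - 1) := by
  have hr0 : (0:ℝ) < r := lt_trans one_pos hr
  have hr1 : (0:ℝ) < r - 1 := by linarith
  have main : ∀ b : ℤ, a - 1 ≤ b →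
      ∑ j ∈ Finset.Icc a b, r ^ (b - j) ≤ (r ^ (b + 1 - a) - 1) / (r - 1) := by
    intro b hb
    refine Int.le_induction
      (motive := fun b _ => ∑ j ∈ Finset.Icc a b, r ^ (b - j) ≤ (r ^ (b + 1 - a) - 1) / (r - 1))
      ?_ ?_ b hb
    · show ∑ j ∈ Finset.Icc a (a-1), r ^ ((a-1) - j) ≤ (r ^ ((a-1) + 1 - a) - 1) / (r - 1)
      rw [Finset.Icc_eq_empty (by omega : ¬ a ≤ a - 1), Finset.sum_empty,
        show a - 1 + 1 - a = (0:ℤ) by ring, zpow_zero]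
      simp
    · intro b hb ih
      show ∑ j ∈ Finset.Icc a (b+1), r ^ ((b+1) - j) ≤ (r ^ ((b+1) + 1 - a) - 1) / (r - 1)
      have hins : Finset.Icc a (b + 1) = insert (b + 1) (Finset.Icc a b) := by
        ext y; simp only [Finset.mem_Icc, Finset.mem_insert]; omega
      rw [hins, Finset.sum_insert (by simp [Finset.mem_Icc])]
      have hterm : ∀ j ∈ Finset.Icc a b, r ^ (b + 1 - j) = r * r ^ (b - j) := by
        intro j _
        rw [show b + 1 - j = 1 + (b - j) by ring, zpow_add₀ (ne_of_gt hr0), zpow_one]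
      rw [Finset.sum_congr rfl hterm, ← Finset.mul_sum]
      have h1 : r ^ (b + 1 - (b + 1)) = 1 := by norm_num
      rw [h1]
      have h2 := mul_le_mul_of_nonneg_left ih (le_of_lt hr0)
      have h3 : r * ((r ^ (b + 1 - a) - 1) / (r - 1)) + 1
          = (r ^ (b + 1 + 1 - a) - 1) / (r - 1) := by
        rw [show b + 1 + 1 - a = 1 + (b + 1 - a) by ring, zpow_add₀ (ne_of_gt hr0), zpow_one]
        field_simp
        ring
      linarith
  intro b hb
  refine le_trans (main b hb) (by gcongr <;> linarith)

lemma dyadic_atom (m : ℤ) {A : Set ℝ} (hA : MeasurableSet[dyadicSigma m] A) :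
    Set.Ico (0:ℝ) (1 / 2 ^ m) ⊆ A ∨ A ∩ Set.Ico (0:ℝ) (1 / 2 ^ m) = ∅ := by
  have h2 : (0:ℝ) < 2 ^ m := by positivity
  induction A, hA using MeasurableSpace.generateFrom_induction with
  | hC t htmem _ =>
    obtain ⟨k, rfl⟩ := htmem
    rcases eq_or_ne k 0 with rfl | hk
    · left; intro x hx; simpa using hx
    · right
      rw [Set.eq_empty_iff_forall_notMem]
      rintro x ⟨⟨h1x, h2x⟩, h3x, h4x⟩
      have hklt : (k:ℝ) < 1 := by
        have hlt := lt_of_le_of_lt h1x h4x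
        rw [div_lt_div_iff₀ h2 h2] at hlt
        nlinarith
      have hkgt : (0:ℝ) < (k:ℝ) + 1 := by
        have hlt := lt_of_le_of_lt h3x h2x
        rw [lt_div_iff₀ h2] at hlt
        linarith
      have : k = 0 := by
        have hk1 : (k:ℤ) < 1 := by exact_mod_cast hklt
        have hk2 : (0:ℤ) < k + 1 := by exact_mod_cast hkgt
        omega
      exact hk this
  | empty => right; simp
  | compl t ht ih =>
    rcases ih with h | h
    · right
      rw [Set.eq_empty_iff_forall_notMem]
      rintro x ⟨hxc, hxI⟩
      exact hxc (h hxI)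
    · left
      intro x hx
      intro hxt
      rw [Set.eq_empty_iff_forall_notMem] at h
      exact h x ⟨hxt, hx⟩
  | iUnion f hf ih =>
    by_cases h : ∃ n, Set.Ico (0:ℝ) (1 / 2 ^ m) ⊆ f n
    · obtain ⟨n, hn⟩ := h
      exact Or.inl (hn.trans (Set.subset_iUnion f n))
    · right
      rw [Set.eq_empty_iff_forall_notMem]
      rintro x ⟨hxU, hxI⟩
      obtain ⟨n, hxn⟩ := Set.mem_iUnion.mp hxU
      rcases ih n with hsub | hdisj
      · exact h ⟨n, hsub⟩
      · rw [Set.eq_empty_iff_forall_notMem] at hdisj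
        exact hdisj x ⟨hxn, hxI⟩

end Aux

/-- the family `θ_j = 2^{(N-j-1)/p} 1_{[0,2^{-N})}`, `0 ≤ j ≤ N-1` (and
`θ_j = 0` otherwise), is a `p`-Carleson family for the dyadic filtration on `[0,1)` with
Carleson constant bounded independently of `N`. -/
theorem stmt9 (p : ℝ) (hp : 1 ≤ p) :
    ∃ Cp : ℝ≥0∞, Cp ≠ ⊤ ∧ ∀ N : ℕ, 0 < N →
      IsCarlesonFamily (volume.restrict (Set.Ico (0 : ℝ) 1)) dyadicSigma p
        (fun (j : ℤ) (ξ : ℝ) =>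
          (if 0 ≤ j ∧ j < (N : ℤ) then (2 : ℝ) ^ (((N : ℝ) - (j : ℝ) - 1) / p) else 0) *
            Set.indicator (Set.Ico (0 : ℝ) (((2 : ℝ) ^ N)⁻¹)) (fun _ => (1 : ℝ)) ξ)
        Cp := by
  have hp0 : 0 < p := lt_of_lt_of_le one_pos hp
  have hp0' : (0:ℝ) ≤ p := le_of_lt hp0
  set r : ℝ := (2:ℝ) ^ ((1:ℝ)/p) with hrdef
  have hr : 1 < r := by
    rw [hrdef]
    exact (Real.one_lt_rpow_iff_of_pos (by norm_num)).mpr (Or.inl ⟨one_lt_two, by positivity⟩)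
  have hc : 0 < r - 1 := by linarith
  refine ⟨ENNReal.ofReal (r - 1)⁻¹, ENNReal.ofReal_ne_top, ?_⟩
  intro N hN
  set θ : ℤ → ℝ → ℝ := fun (j : ℤ) (ξ : ℝ) =>
    (if 0 ≤ j ∧ j < (N : ℤ) then (2 : ℝ) ^ (((N : ℝ) - (j : ℝ) - 1) / p) else 0) *
      Set.indicator (Set.Ico (0 : ℝ) (((2 : ℝ) ^ N)⁻¹)) (fun _ => (1 : ℝ)) ξ with hθdef
  have hrp : ∀ k : ℤ, (r ^ k) ^ p = (2:ℝ) ^ k := by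
    intro k
    rw [← Real.rpow_intCast r k, hrdef,
      ← Real.rpow_mul (by norm_num : (0:ℝ) ≤ 2),
      ← Real.rpow_mul (by norm_num : (0:ℝ) ≤ 2),
      ← Real.rpow_intCast 2 k]
    congr 1
    field_simp
  refine ⟨?_, ?_, ?_⟩
  · intro j
    rw [hθdef]
    exact ((Measurable.indicator measurable_const measurableSet_Ico).const_mul
      _).aestronglyMeasurable
  · intro m
    refine Filter.Eventually.of_forall (fun ξ => ?_)
    intro δ hδ
    refine ⟨Finset.Icc m ((N:ℤ) - 1), ?_, ?_⟩
    · intro j hj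
      simp only [Finset.coe_Icc, Set.mem_Icc] at hj
      exact hj.1
    · intro s hs hdisj
      have hz : radMoment 2 (fun j => θ j ξ) s ≤ (0:ℝ) ^ (2:ℝ) := by
        apply radMoment_le_rpow (by norm_num)
        apply le_of_eq
        apply Finset.sum_eq_zero
        intro j hj
        have hjm : m ≤ j := hs hj
        have hnI : j ∉ Finset.Icc m ((N:ℤ)-1) := Finset.disjoint_left.mp hdisj hj
        have hnot : ¬ (0 ≤ j ∧ j < (N:ℤ)) := by
          simp only [Finset.mem_Icc] at hnI; omega
        simp [hθdef, hnot]
      rw [Real.zero_rpow (by norm_num)] at hz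
      exact lt_of_le_of_lt hz hδ
  · intro m A hA
    have hdle : dyadicSigma m ≤ (inferInstance : MeasurableSpace ℝ) := by
      refine MeasurableSpace.generateFrom_le ?_
      rintro t ⟨k, rfl⟩
      exact measurableSet_Ico
    have hAm : MeasurableSet A := hdle _ hA
    by_cases hmN : m ≤ (N:ℤ)
    · set m' : ℤ := max m 0 with hm'
      have hm'0 : 0 ≤ m' := le_max_right _ _
      have hm'm : m ≤ m' := le_max_left _ _
      have hm'N : m' ≤ (N:ℤ) := max_le hmN (by exact_mod_cast Nat.zero_le N)
      set D : ℝ := ∑ j ∈ Finset.Icc m' ((N:ℤ)-1), r ^ ((N:ℤ) - 1 - j) with hD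
      have hDnn : 0 ≤ D :=
        Finset.sum_nonneg fun j _ => le_of_lt (zpow_pos (by linarith) _)
      have hbound : ∀ ξ : ℝ, ∀ s : Finset ℤ, ↑s ⊆ {j : ℤ | m ≤ j} →
          ∑ j ∈ s, ‖θ j ξ‖ ≤ D := by
        intro ξ s hs
        calc ∑ j ∈ s, ‖θ j ξ‖
            = ∑ j ∈ s ∩ Finset.Icc m' ((N:ℤ)-1), ‖θ j ξ‖ := by
              refine (Finset.sum_subset Finset.inter_subset_left ?_).symm
              intro j hj hj'
              have hjm : m ≤ j := hs hj
              have hnI : j ∉ Finset.Icc m' ((N:ℤ)-1) :=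
                fun hmem => hj' (Finset.mem_inter.mpr ⟨hj, hmem⟩)
              have hnot : ¬ (0 ≤ j ∧ j < (N:ℤ)) := by
                rintro ⟨h0, hNj⟩
                exact hnI (Finset.mem_Icc.mpr ⟨max_le hjm h0, by omega⟩)
              simp [hθdef, hnot]
          _ ≤ ∑ j ∈ s ∩ Finset.Icc m' ((N:ℤ)-1), r ^ ((N:ℤ) - 1 - j) := by
              refine Finset.sum_le_sum (fun j hj => ?_)
              have hcalc : r ^ ((N:ℤ) - 1 - j) = (2:ℝ) ^ (((N:ℝ) - (j:ℝ) - 1)/p) := by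
                rw [← Real.rpow_intCast r ((N:ℤ)-1-j), hrdef,
                  ← Real.rpow_mul (by norm_num : (0:ℝ) ≤ 2)]
                congr 1
                push_cast
                ring
              rw [hθdef]
              simp only []
              rw [norm_mul, hcalc]
              have h1 : ‖(if 0 ≤ j ∧ j < (N:ℤ) then (2:ℝ) ^ (((N:ℝ) - (j:ℝ) - 1)/p) else 0)‖
                  ≤ (2:ℝ) ^ (((N:ℝ) - (j:ℝ) - 1)/p) := by
                split
                · rw [Real.norm_of_nonneg (le_of_lt (Real.rpow_pos_of_pos two_pos _))]
                · simpa using le_of_lt (Real.rpow_pos_of_pos two_pos _)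
              have h2 : ‖Set.indicator (Set.Ico (0:ℝ) (((2:ℝ)^N)⁻¹)) (fun _ => (1:ℝ)) ξ‖
                  ≤ 1 := by
                by_cases hξ : ξ ∈ Set.Ico (0:ℝ) (((2:ℝ)^N)⁻¹) <;>
                  simp [Set.indicator_of_mem, Set.indicator_of_notMem, hξ]
              calc ‖(if 0 ≤ j ∧ j < (N:ℤ) then (2:ℝ) ^ (((N:ℝ) - (j:ℝ) - 1)/p) else 0)‖ *
                    ‖Set.indicator (Set.Ico (0:ℝ) (((2:ℝ)^N)⁻¹)) (fun _ => (1:ℝ)) ξ‖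
                  ≤ (2:ℝ) ^ (((N:ℝ) - (j:ℝ) - 1)/p) * 1 :=
                    mul_le_mul h1 h2 (norm_nonneg _)
                      (le_of_lt (Real.rpow_pos_of_pos two_pos _))
                _ = (2:ℝ) ^ (((N:ℝ) - (j:ℝ) - 1)/p) := mul_one _
          _ ≤ D := by
              rw [hD]
              refine Finset.sum_le_sum_of_subset_of_nonneg Finset.inter_subset_right ?_
              intro j _ _
              exact le_of_lt (zpow_pos (by linarith) _)
      have hpt : ∀ ξ : ℝ,
          ENNReal.ofReal (radMomentSet p (fun j => θ j ξ) {j : ℤ | m ≤ j})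
            ≤ Set.indicator (Set.Ico (0:ℝ) (((2:ℝ)^N)⁻¹))
                (fun _ => ENNReal.ofReal (D ^ p)) ξ := by
        intro ξ
        by_cases hξ : ξ ∈ Set.Ico (0:ℝ) (((2:ℝ)^N)⁻¹)
        · rw [Set.indicator_of_mem hξ]
          exact ENNReal.ofReal_le_ofReal
            (radMomentSet_le_rpow hp0' _ _ (hbound ξ))
        · rw [Set.indicator_of_notMem hξ]
          refine le_of_eq (ENNReal.ofReal_eq_zero.mpr ?_)
          have hle : radMomentSet p (fun j => θ j ξ) {j : ℤ | m ≤ j} ≤ (0:ℝ) ^ p := by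
            apply radMomentSet_le_rpow hp0'
            intro s hs
            refine le_of_eq (Finset.sum_eq_zero fun j hj => ?_)
            simp [hθdef, Set.indicator_of_notMem hξ]
          rwa [Real.zero_rpow (ne_of_gt hp0)] at hle
      have hgeom := geom_sum_zpow_le hr m' ((N:ℤ)-1) (by omega)
      have hDle : D ≤ r ^ ((N:ℤ) - m') / (r-1) := by
        rw [hD]
        refine le_trans hgeom (le_of_eq ?_)
        congr 2
        ring
      have hDp : D ^ p ≤ (2:ℝ) ^ ((N:ℤ) - m') / (r-1) ^ p := by
        have h1 : D ^ p ≤ (r ^ ((N:ℤ)-m') / (r-1)) ^ p :=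
          Real.rpow_le_rpow hDnn hDle hp0'
        refine le_trans h1 (le_of_eq ?_)
        rw [Real.div_rpow (le_of_lt (zpow_pos (by linarith) _)) (le_of_lt hc), hrp]
      have hreal : D ^ p * ((2:ℝ)^N)⁻¹ ≤ (r-1)⁻¹ ^ p * (2:ℝ) ^ (-m') := by
        have h2N : ((2:ℝ)^N)⁻¹ = (2:ℝ) ^ (-(N:ℤ)) := by
          rw [zpow_neg, zpow_natCast]
        rw [h2N, Real.inv_rpow (le_of_lt hc)]
        calc D ^ p * (2:ℝ)^(-(N:ℤ))
            ≤ ((2:ℝ)^((N:ℤ)-m') / (r-1)^p) * (2:ℝ)^(-(N:ℤ)) :=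
              mul_le_mul_of_nonneg_right hDp (le_of_lt (zpow_pos two_pos _))
          _ = ((r-1)^p)⁻¹ * ((2:ℝ)^((N:ℤ)-m') * (2:ℝ)^(-(N:ℤ))) := by ring
          _ = ((r-1)^p)⁻¹ * (2:ℝ)^(-m') := by
              rw [← zpow_add₀ (two_ne_zero : (2:ℝ) ≠ 0)]
              congr 1
              ring
      have step1 : ∫⁻ ξ in A,
            ENNReal.ofReal (radMomentSet p (fun j => θ j ξ) {j : ℤ | m ≤ j})
            ∂(volume.restrict (Set.Ico (0:ℝ) 1))
          ≤ ENNReal.ofReal (D ^ p) *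
              (volume.restrict (Set.Ico (0:ℝ) 1))
                (Set.Ico (0:ℝ) (((2:ℝ)^N)⁻¹) ∩ A) := by
        refine le_trans (lintegral_mono fun ξ => hpt ξ) (le_of_eq ?_)
        rw [lintegral_indicator measurableSet_Ico, setLIntegral_const,
          Measure.restrict_apply measurableSet_Ico]
      rcases dyadic_atom m hA with hsub | hdisj
      · -- the dyadic interval of generation m containing 0 lies in A
        have hμA : ENNReal.ofReal ((2:ℝ) ^ (-m')) ≤
            (volume.restrict (Set.Ico (0:ℝ) 1)) A := by
          rw [Measure.restrict_apply hAm]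
          have hv : volume (Set.Ico (0:ℝ) ((2:ℝ)^(-m'))) =
              ENNReal.ofReal ((2:ℝ)^(-m')) := by
            rw [Real.volume_Ico, sub_zero]
          rw [← hv]
          refine measure_mono ?_
          rintro x ⟨hx0, hx1⟩
          refine ⟨hsub ⟨hx0, lt_of_lt_of_le hx1 ?_⟩, hx0, lt_of_lt_of_le hx1 ?_⟩
          · rw [one_div, ← zpow_neg]
            exact zpow_le_zpow_right₀ one_le_two (by omega)
          · calc (2:ℝ) ^ (-m') ≤ (2:ℝ) ^ (0:ℤ) :=
                zpow_le_zpow_right₀ one_le_two (by omega)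
              _ = 1 := zpow_zero 2
        have hBB : (volume.restrict (Set.Ico (0:ℝ) 1))
              (Set.Ico (0:ℝ) (((2:ℝ)^N)⁻¹) ∩ A) ≤ ENNReal.ofReal ((2:ℝ)^N)⁻¹ := by
          rw [Measure.restrict_apply (measurableSet_Ico.inter hAm)]
          refine le_trans (measure_mono (Set.inter_subset_left.trans
            Set.inter_subset_left)) (le_of_eq ?_)
          rw [Real.volume_Ico, sub_zero]
        refine le_trans step1 ?_
        calc ENNReal.ofReal (D ^ p) *
              (volume.restrict (Set.Ico (0:ℝ) 1)) (Set.Ico (0:ℝ) (((2:ℝ)^N)⁻¹) ∩ A)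
            ≤ ENNReal.ofReal (D ^ p) * ENNReal.ofReal ((2:ℝ)^N)⁻¹ :=
              mul_le_mul_right hBB _
          _ = ENNReal.ofReal (D ^ p * ((2:ℝ)^N)⁻¹) :=
              (ENNReal.ofReal_mul (Real.rpow_nonneg hDnn p)).symm
          _ ≤ ENNReal.ofReal ((r-1)⁻¹ ^ p * (2:ℝ) ^ (-m')) :=
              ENNReal.ofReal_le_ofReal hreal
          _ = ENNReal.ofReal ((r-1)⁻¹ ^ p) * ENNReal.ofReal ((2:ℝ) ^ (-m')) :=
              ENNReal.ofReal_mul (Real.rpow_nonneg (by positivity) p)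
          _ = ENNReal.ofReal (r-1)⁻¹ ^ p * ENNReal.ofReal ((2:ℝ) ^ (-m')) := by
              rw [ENNReal.ofReal_rpow_of_nonneg (by positivity) hp0']
          _ ≤ ENNReal.ofReal (r-1)⁻¹ ^ p *
              (volume.restrict (Set.Ico (0:ℝ) 1)) A := mul_le_mul_right hμA _
      · -- A misses the dyadic interval containing 0
        have hempty : (volume.restrict (Set.Ico (0:ℝ) 1))
            (Set.Ico (0:ℝ) (((2:ℝ)^N)⁻¹) ∩ A) = 0 := by
          rw [Measure.restrict_apply (measurableSet_Ico.inter hAm)]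
          have h0 : volume (A ∩ Set.Ico (0:ℝ) (1 / 2 ^ m)) = 0 := by
            rw [hdisj]; exact measure_empty
          refine measure_mono_null (fun x hx => ?_) h0
          obtain ⟨⟨⟨hx0, hx1⟩, hxA⟩, -⟩ := hx
          refine ⟨hxA, hx0, lt_of_lt_of_le hx1 ?_⟩
          rw [one_div, ← zpow_neg]
          calc ((2:ℝ)^N)⁻¹ = (2:ℝ) ^ (-(N:ℤ)) := by rw [zpow_neg, zpow_natCast]
            _ ≤ (2:ℝ) ^ (-m) := zpow_le_zpow_right₀ one_le_two (by omega)
        refine le_trans step1 ?_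
        rw [hempty, mul_zero]
        exact zero_le
    · -- m > N : all relevant θ_j vanish
      have hzero : ∀ ξ : ℝ,
          ENNReal.ofReal (radMomentSet p (fun j => θ j ξ) {j : ℤ | m ≤ j}) = 0 := by
        intro ξ
        refine ENNReal.ofReal_eq_zero.mpr ?_
        have hle : radMomentSet p (fun j => θ j ξ) {j : ℤ | m ≤ j} ≤ (0:ℝ) ^ p := by
          apply radMomentSet_le_rpow hp0'
          intro s hs
          refine le_of_eq (Finset.sum_eq_zero fun j hj => ?_)
          have hjm : m ≤ j := hs hj
          have hnot : ¬ (0 ≤ j ∧ j < (N:ℤ)) := by omega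
          simp [hθdef, hnot]
        rwa [Real.zero_rpow (ne_of_gt hp0)] at hle
      refine le_trans (le_of_eq ?_) zero_le
      simp [hzero]

end
end

section
/- Let E be a Banach space, 1 ≤ p < ∞, N a positive integer, and x_1,…,x_N ∈ E. Set y_j = 2^{j/p}x_j for j = 1,…,N and y_{N+1} = 0, define f : [0,1) → E by f = 0 on [0,2^{−N}) and f = 2y_j − y_{j+1} on [2^{−j},2^{−j+1}) for j = 1,…,N, and define θ_j = 2^{(N−j−1)/p} 1_{[0,2^{−N})} for 0 ≤ j ≤ N−1. Then ∫_0^1 𝔼‖∑_{j=0}^{N−1} ε_j θ_j(ξ) E_j f(ξ)‖^p dξ = 𝔼‖∑_{i=1}^N ε_i x_i‖^p. -/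
open MeasureTheory ENNReal Set
open scoped ZeroAtInfty

noncomputable section

lemma radMoment_congr {ι : Type*} (p : ℝ) {E : Type*} [NormedAddCommGroup E] [NormedSpace ℝ E]
    {x z : ι → E} {s : Finset ι} (h : ∀ j ∈ s, x j = z j) :
    radMoment p x s = radMoment p z s := by
  unfold radMoment
  congr 1
  refine Finset.sum_congr rfl fun ε _ => ?_
  congr 2
  exact Finset.sum_congr rfl fun j _ => by rw [h j.1 j.2]

lemma radMoment_eq_zero {ι : Type*} {p : ℝ} (hp : p ≠ 0) {E : Type*} [NormedAddCommGroup E]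
    [NormedSpace ℝ E] {x : ι → E} {s : Finset ι} (h : ∀ j ∈ s, x j = 0) :
    radMoment p x s = 0 := by
  unfold radMoment
  have : ∀ ε : { a // a ∈ s } → Bool,
      ‖∑ j : { a // a ∈ s }, (if ε j then (1 : ℝ) else -1) • x j.1‖ ^ p = 0 := by
    intro ε
    have : ∑ j : { a // a ∈ s }, (if ε j then (1 : ℝ) else -1) • x j.1 = 0 := by
      refine Finset.sum_eq_zero fun j _ => ?_
      rw [h j.1 j.2, smul_zero]
    rw [this, norm_zero, Real.zero_rpow hp]
  rw [Finset.sum_eq_zero fun ε _ => this ε, zero_div]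

lemma radMoment_smul {ι : Type*} {p : ℝ} {E : Type*} [NormedAddCommGroup E]
    [NormedSpace ℝ E] {c : ℝ} (hc : 0 ≤ c) (x : ι → E) (s : Finset ι) :
    radMoment p (fun j => c • x j) s = c ^ p * radMoment p x s := by
  unfold radMoment
  rw [← mul_div_assoc, Finset.mul_sum]
  congr 1
  refine Finset.sum_congr rfl fun ε _ => ?_
  have h1 : ∑ j : { a // a ∈ s }, (if ε j then (1 : ℝ) else -1) • c • x j.1
      = c • ∑ j : { a // a ∈ s }, (if ε j then (1 : ℝ) else -1) • x j.1 := by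
    rw [Finset.smul_sum]
    exact Finset.sum_congr rfl fun j _ => smul_comm _ _ _
  rw [h1, norm_smul, Real.norm_eq_abs, abs_of_nonneg hc, Real.mul_rpow hc (norm_nonneg _)]

lemma radMoment_equiv {ι κ : Type*} (p : ℝ) {E : Type*} [NormedAddCommGroup E]
    [NormedSpace ℝ E] {x : ι → E} {z : κ → E} {s : Finset ι} {t : Finset κ}
    (e : { a // a ∈ s } ≃ { b // b ∈ t }) (hx : ∀ a : { a // a ∈ s }, x a.1 = z (e a).1) :
    radMoment p x s = radMoment p z t := by
  letI : DecidableEq ι := Classical.decEq ι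
  letI : DecidableEq κ := Classical.decEq κ
  unfold radMoment
  have hcard : s.card = t.card := by
    rw [← Fintype.card_coe, ← Fintype.card_coe]
    exact Fintype.card_congr e
  rw [hcard]
  congr 1
  refine Fintype.sum_equiv (Equiv.arrowCongr e (Equiv.refl Bool)) _ _ fun ε => ?_
  congr 2
  refine Fintype.sum_equiv e _ _ fun j => ?_
  simp [Equiv.arrowCongr, hx j]


lemma integral_f {E : Type*} [NormedAddCommGroup E] [NormedSpace ℝ E] [CompleteSpace E]
    (N : ℕ) (y : ℕ → E) (hyN : y (N + 1) = 0) (f : ℝ → E)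
    (hf : f = fun ξ => ∑ j ∈ Finset.Icc 1 N,
      Set.indicator (Set.Ico ((2 : ℝ) ^ (-(j : ℤ))) ((2 : ℝ) ^ (-(j : ℤ) + 1)))
        (fun _ => (2 : ℝ) • y j - y (j + 1)) ξ)
    (j : ℤ) (hj0 : 0 ≤ j) (hjN : j ≤ (N : ℤ) - 1) :
    ∫ t in Set.Ico (0 : ℝ) ((2 : ℝ) ^ (-j)), f t = (2 : ℝ) ^ (-j) • y (j.toNat + 1) := by
  have h2 : (0:ℝ) < 2 := two_pos
  have h2ne : (2:ℝ) ≠ 0 := two_ne_zero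
  subst hf
  rw [integral_finset_sum _ (fun k _ => by exact ((integrableOn_const
      measure_Ico_lt_top.ne).indicator measurableSet_Ico))]
  have hterm : ∀ k ∈ Finset.Icc 1 N,
      (∫ t in Set.Ico (0:ℝ) ((2:ℝ)^(-j)),
        Set.indicator (Set.Ico ((2 : ℝ) ^ (-(k : ℤ))) ((2 : ℝ) ^ (-(k : ℤ) + 1)))
          (fun _ => (2 : ℝ) • y k - y (k + 1)) t)
      = if j.toNat + 1 ≤ k then (2:ℝ)^(-(k:ℤ)) • ((2:ℝ) • y k - y (k+1)) else 0 := by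
    intro k hk
    simp only [Finset.mem_Icc] at hk
    rw [integral_indicator measurableSet_Ico, Measure.restrict_restrict measurableSet_Ico,
      setIntegral_const, Set.Ico_inter_Ico]
    rw [max_eq_left (by positivity)]
    by_cases hc : j.toNat + 1 ≤ k
    · rw [if_pos hc]
      have hkj : (-(k:ℤ) + 1) ≤ -j := by omega
      have hmin : min ((2:ℝ)^(-(k:ℤ)+1)) ((2:ℝ)^(-j)) = (2:ℝ)^(-(k:ℤ)+1) :=
        min_eq_left (zpow_le_zpow_right₀ one_le_two hkj)
      rw [hmin, Real.volume_real_Ico]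
      have hsub : (2:ℝ)^(-(k:ℤ)+1) - (2:ℝ)^(-(k:ℤ)) = (2:ℝ)^(-(k:ℤ)) := by
        rw [zpow_add₀ h2ne, zpow_one]; ring
      rw [hsub, max_eq_left (by positivity)]
    · rw [if_neg hc]
      have hkj : -j ≤ -(k:ℤ) := by omega
      have : Set.Ico ((2:ℝ)^(-(k:ℤ))) (min ((2:ℝ)^(-(k:ℤ)+1)) ((2:ℝ)^(-j))) = ∅ := by
        apply Set.Ico_eq_empty
        rw [not_lt]
        exact le_trans (min_le_right _ _) (zpow_le_zpow_right₀ one_le_two hkj)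
      rw [this, measureReal_empty, zero_smul]
  rw [Finset.sum_congr rfl hterm]
  rw [← Finset.sum_subset (Finset.Icc_subset_Icc_left (by omega : 1 ≤ j.toNat + 1))
      (fun k _ hk2 => by
        rw [if_neg]
        simp only [Finset.mem_Icc] at *
        omega)]
  have hterm2 : ∀ k ∈ Finset.Icc (j.toNat + 1) N,
      (if j.toNat + 1 ≤ k then (2:ℝ)^(-(k:ℤ)) • ((2:ℝ) • y k - y (k+1)) else 0)
      = ((2:ℝ)^(1-(k:ℤ)) • y k) - ((2:ℝ)^(1-((k+1:ℕ):ℤ)) • y (k+1)) := by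
    intro k hk
    simp only [Finset.mem_Icc] at hk
    rw [if_pos hk.1, smul_sub, smul_smul]
    congr 2
    · rw [show (1:ℤ)-(k:ℤ) = -(k:ℤ)+1 by ring, zpow_add₀ h2ne, zpow_one]
    · congr 1; push_cast; ring
  rw [Finset.sum_congr rfl hterm2]
  rw [← Finset.Ico_add_one_right_eq_Icc, Finset.sum_Ico_eq_sum_range]
  have hstep : ∀ i ∈ Finset.range (N + 1 - (j.toNat + 1)),
      ((2:ℝ)^(1-((j.toNat + 1 + i : ℕ):ℤ)) • y (j.toNat + 1 + i))
        - ((2:ℝ)^(1-((j.toNat + 1 + i + 1:ℕ):ℤ)) • y (j.toNat + 1 + i + 1))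
      = (fun m => (2:ℝ)^(1-((j.toNat + 1 + m : ℕ):ℤ)) • y (j.toNat + 1 + m)) i
        - (fun m => (2:ℝ)^(1-((j.toNat + 1 + m : ℕ):ℤ)) • y (j.toNat + 1 + m)) (i+1) := by
    intro i _
    simp only
    congr 3
  rw [Finset.sum_congr rfl hstep, Finset.sum_range_sub']
  have hNj : j.toNat + 1 + (N + 1 - (j.toNat + 1)) = N + 1 := by omega
  rw [hNj, hyN, smul_zero, sub_zero, add_zero]
  congr 1
  have : (((j.toNat + 1 : ℕ)):ℤ) = j + 1 := by omega
  rw [this]; ring_nf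


/-- with `y_j = 2^{j/p} x_j`, the test function `f` and the Carleson family
`θ` reproduce the Rademacher moment of `x_1, …, x_N`:
`∫_0^1 𝔼‖∑_{j=0}^{N-1} ε_j θ_j(ξ) E_j f(ξ)‖^p dξ = 𝔼‖∑_{i=1}^N ε_i x_i‖^p`. -/
theorem stmt11 {E : Type*} [NormedAddCommGroup E] [NormedSpace ℝ E] [CompleteSpace E]
    (p : ℝ) (hp : 1 ≤ p) (N : ℕ) (hN : 0 < N) (x : ℕ → E)
    (y : ℕ → E)
    (hy : y = fun j => if 1 ≤ j ∧ j ≤ N then (2 : ℝ) ^ ((j : ℝ) / p) • x j else 0)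
    (f : ℝ → E)
    (hf : f = fun ξ => ∑ j ∈ Finset.Icc 1 N,
      Set.indicator (Set.Ico ((2 : ℝ) ^ (-(j : ℤ))) ((2 : ℝ) ^ (-(j : ℤ) + 1)))
        (fun _ => (2 : ℝ) • y j - y (j + 1)) ξ)
    (θ : ℤ → ℝ → ℝ)
    (hθ : θ = fun (j : ℤ) (ξ : ℝ) =>
      (if 0 ≤ j ∧ j < (N : ℤ) then (2 : ℝ) ^ (((N : ℝ) - (j : ℝ) - 1) / p) else 0) *
        Set.indicator (Set.Ico (0 : ℝ) (((2 : ℝ) ^ N)⁻¹)) (fun _ => (1 : ℝ)) ξ) :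
    (∫ ξ in Set.Ico (0 : ℝ) 1,
        radMoment p (fun j : ℤ => θ j ξ • dyadicAvg f j ξ) (Finset.Icc 0 ((N : ℤ) - 1))) =
      radMoment p x (Finset.Icc 1 N) := by
  have hp0 : (0:ℝ) < p := lt_of_lt_of_le one_pos hp
  have hpne : p ≠ 0 := ne_of_gt hp0
  have h2ne : (2:ℝ) ≠ 0 := two_ne_zero
  have hyN : y (N + 1) = 0 := by rw [hy]; simp
  have key : ∀ ξ ∈ Set.Ico (0:ℝ) 1,
      radMoment p (fun j : ℤ => θ j ξ • dyadicAvg f j ξ) (Finset.Icc 0 ((N:ℤ)-1))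
        = Set.indicator (Set.Ico (0:ℝ) (((2:ℝ)^N)⁻¹))
            (fun _ => (2:ℝ)^N * radMoment p x (Finset.Icc 1 N)) ξ := by
    intro ξ _
    by_cases hmem : ξ ∈ Set.Ico (0:ℝ) (((2:ℝ)^N)⁻¹)
    · rw [Set.indicator_of_mem hmem]
      have havg : ∀ j : ℤ, j ∈ Finset.Icc 0 ((N:ℤ)-1) →
          dyadicAvg f j ξ = y (j.toNat + 1) := by
        intro j hj
        simp only [Finset.mem_Icc] at hj
        have hfl : ⌊ξ * (2:ℝ) ^ j⌋ = 0 := by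
          rw [Int.floor_eq_zero_iff]
          constructor
          · exact mul_nonneg hmem.1 (le_of_lt (zpow_pos two_pos j))
          · have h1 : ξ * (2:ℝ)^j < ((2:ℝ)^N)⁻¹ * (2:ℝ)^j :=
              mul_lt_mul_of_pos_right hmem.2 (zpow_pos two_pos j)
            have h2 : ((2:ℝ)^N)⁻¹ * (2:ℝ)^j = (2:ℝ)^(j - (N:ℤ)) := by
              rw [← zpow_natCast (2:ℝ) N, ← zpow_neg, ← zpow_add₀ h2ne]
              congr 1; ring
            have h3 : (2:ℝ)^(j - (N:ℤ)) ≤ (2:ℝ)^(0:ℤ) :=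
              zpow_le_zpow_right₀ one_le_two (by omega)
            rw [h2] at h1
            calc ξ * (2:ℝ)^j < (2:ℝ)^(j-(N:ℤ)) := h1
              _ ≤ 1 := by rw [zpow_zero] at h3; exact h3
        unfold dyadicAvg
        rw [hfl]
        push_cast
        rw [zero_div, zero_add, one_div, ← zpow_neg]
        rw [integral_f N y hyN f hf j hj.1 hj.2]
        rw [smul_smul, ← zpow_add₀ h2ne, add_neg_cancel, zpow_zero, one_smul]
      have hval : ∀ j : ℤ, j ∈ Finset.Icc 0 ((N:ℤ)-1) →
          θ j ξ • dyadicAvg f j ξ = (2:ℝ)^((N:ℝ)/p) • x (j.toNat + 1) := by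
        intro j hj
        have hj' := Finset.mem_Icc.mp hj
        rw [havg j hj, hθ]
        simp only
        rw [Set.indicator_of_mem hmem, mul_one, if_pos ⟨hj'.1, by omega⟩, hy]
        simp only
        rw [if_pos ⟨by omega, by omega⟩, smul_smul, ← Real.rpow_add two_pos]
        congr 2
        have h1 : ((j.toNat : ℕ) : ℤ) = j := Int.toNat_of_nonneg hj'.1
        have hc : ((j.toNat + 1 : ℕ) : ℝ) = (j:ℝ) + 1 := by
          have h2 : ((j.toNat : ℕ) : ℝ) = (j:ℝ) := by exact_mod_cast congrArg (fun n : ℤ => (n : ℝ)) h1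
          push_cast
          rw [h2]
        rw [hc, ← add_div]
        ring_nf
      rw [radMoment_congr p hval]
      rw [radMoment_smul (by positivity)]
      have hpow : ((2:ℝ)^((N:ℝ)/p)) ^ p = (2:ℝ)^N := by
        rw [← Real.rpow_natCast (2:ℝ) N, ← Real.rpow_mul (le_of_lt two_pos),
          div_mul_cancel₀ _ hpne]
      rw [hpow]
      congr 1
      refine radMoment_equiv p ?_ ?_
      · exact {
          toFun := fun a => ⟨a.1.toNat + 1, by
            have := Finset.mem_Icc.mp a.2
            rw [Finset.mem_Icc]; omega⟩
          invFun := fun b => ⟨(b.1 : ℤ) - 1, by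
            have := Finset.mem_Icc.mp b.2
            rw [Finset.mem_Icc]; omega⟩
          left_inv := fun a => Subtype.ext (by
            have := Finset.mem_Icc.mp a.2; simp; omega)
          right_inv := fun b => Subtype.ext (by
            have := Finset.mem_Icc.mp b.2; simp; omega) }
      · intro a; rfl
    · rw [Set.indicator_of_notMem hmem]
      refine radMoment_eq_zero hpne fun j _ => ?_
      rw [hθ]
      simp only
      rw [Set.indicator_of_notMem hmem, mul_zero, zero_smul]
  rw [setIntegral_congr_fun measurableSet_Ico key]
  rw [setIntegral_indicator measurableSet_Ico]
  have hinter : Set.Ico (0:ℝ) 1 ∩ Set.Ico 0 (((2:ℝ)^N)⁻¹) = Set.Ico 0 (((2:ℝ)^N)⁻¹) :=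
    Set.inter_eq_right.mpr (Set.Ico_subset_Ico_right
      (inv_le_one_of_one_le₀ (one_le_pow₀ one_le_two)))
  rw [hinter, setIntegral_const, Real.volume_real_Ico, sub_zero,
    max_eq_left (by positivity), smul_eq_mul, ← mul_assoc,
    inv_mul_cancel₀ (by positivity), one_mul]

end
end
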